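/- Let S be a seed of type (n,k) with (n,k) ≠ (4,1), and let (p_m)_{m≥0} be the inward spiral vertices generated by S. Then for every m ≥ 0, the five consecutive points p_m, p_{m+1}, p_{m+2}, p_{m+3}, p_{m+4} are in strictly convex position in this cyclic order; i.e., every five consecutive vertices of a PLC pentagram spiral are the vertices of a strictly convex pentagon. -/

import Mathlib

/-- Planar determinant (cross product) of two vectors of `ℝ²`. -/
def det2 (u v : ℝ × ℝ) : ℝ := u.1 * v.2 - u.2 * v.1

/-- Counterclockwise orientation of an ordered triple of points of `ℝ²`. -/
def ccw (a b c : ℝ × ℝ) : Prop := 0 < det2 (b - a) (c - a)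

/-- The (1-indexed) points `A 1, …, A n` are in strictly convex position in this
(counterclockwise) cyclic order: every triple taken in cyclic order is
counterclockwise. -/
def ConvexCyc (n : ℕ) (A : ℕ → ℝ × ℝ) : Prop :=
  ∀ i j l : ℕ, 1 ≤ i → i < j → j < l → l ≤ n → ccw (A i) (A j) (A l)

/-- A seed of type `(n,k)`: the points `A 1, …, A n` are in strictly convex position
in counterclockwise cyclic order, and for `j = n-k+1, …, n` the point `B j` lies in
the open segment between `A j` and `A (j+1)` (indices mod `n`, so `A (n+1) = A 1`;
note `j % n + 1` equals `j + 1` for `j < n` and equals `1` for `j = n`).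
Only the values `A 1, …, A n` and `B (n-k+1), …, B n` are relevant. -/
def IsSeed (n k : ℕ) (A B : ℕ → ℝ × ℝ) : Prop :=
  ConvexCyc n A ∧
    ∀ j : ℕ, n - k + 1 ≤ j → j ≤ n →
      ∃ t ∈ Set.Ioo (0 : ℝ) 1, B j = A j + t • (A (j % n + 1) - A j)

/-- The point `p` lies on the line through `a` and `b`. -/
def onLine (a b p : ℝ × ℝ) : Prop := det2 (b - a) (p - a) = 0

/-- The intersection point of the line through `a`, `b` with the line through
`c`, `d` (when the two lines are non-parallel). -/
noncomputable def lineInter (a b c d : ℝ × ℝ) : ℝ × ℝ :=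
  a + (det2 (c - a) (d - c) / det2 (b - a) (d - c)) • (b - a)

/-- Auxiliary descending recursion producing the points `B*`: `BstAux n A Astar d`
is the point `B*_(n-d)`.  For `d = 0`, `B*_n` is the intersection of the line
through `A 1` and `A*_2` with the line through `A*_n` and `A*_1`; descending,
`B*_j` (`j = n - d - 1`) is the intersection of the line through `A (j+1)` and
`B*_(j+1)` with the line through `A*_j` and `A*_(j+1)`. -/
noncomputable def BstAux (n : ℕ) (A Astar : ℕ → ℝ × ℝ) : ℕ → ℝ × ℝ
  | 0 => lineInter (A 1) (Astar 2) (Astar n) (Astar 1)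
  | d + 1 => lineInter (A (n - d)) (BstAux n A Astar d) (Astar (n - d - 1)) (Astar (n - d))

/-- The seed map `T_{n,k}`, sending the configuration `(A, B)` to `(A*, B*)`:
`A*_i = A_(i+1)` for `i = 1, …, n-k`; `A*_i = B_i` for `i = n-k+1, …, n`; and the
points `B*_j`, `j = n, n-1, …, n-k+1`, are produced by the descending intersection
recursion `BstAux`. -/
noncomputable def seedMap (n k : ℕ) (S : (ℕ → ℝ × ℝ) × (ℕ → ℝ × ℝ)) :
    (ℕ → ℝ × ℝ) × (ℕ → ℝ × ℝ) :=
  let Astar : ℕ → ℝ × ℝ := fun i => if i ≤ n - k then S.1 (i + 1) else S.2 i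
  (Astar, fun j => BstAux n S.1 Astar (n - j))

/-- Points `w 0, …, w (N-1)` are in strictly convex position in this
(counterclockwise) cyclic order: every ordered triple is counterclockwise. -/
def StrictlyConvexCCW {N : ℕ} (w : Fin N → ℝ × ℝ) : Prop :=
  ∀ i j k : Fin N, i < j → j < k → ccw (w i) (w j) (w k)

/-- signed triple determinant -/
def d3 (a b c : ℝ × ℝ) : ℝ := det2 (b - a) (c - a)

lemma ccw_iff (a b c : ℝ × ℝ) : ccw a b c ↔ 0 < d3 a b c := Iff.rfl

lemma d3_rot (a b c : ℝ × ℝ) : d3 a b c = d3 b c a := by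
  simp [d3, det2]; ring

lemma d3_rot' (a b c : ℝ × ℝ) : d3 a b c = d3 c a b := by
  simp [d3, det2]; ring

lemma d3_swap (a b c : ℝ × ℝ) : d3 a b c = - d3 a c b := by
  simp [d3, det2]; ring

lemma d3_self12 (a c : ℝ × ℝ) : d3 a a c = 0 := by simp [d3, det2]
lemma d3_self23 (a b : ℝ × ℝ) : d3 a b b = 0 := by simp [d3, det2]; ring
lemma d3_self13 (a b : ℝ × ℝ) : d3 a b a = 0 := by simp [d3, det2]

lemma d3_aff1 (p q y z : ℝ × ℝ) (t : ℝ) :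
    d3 (p + t • (q - p)) y z = (1 - t) * d3 p y z + t * d3 q y z := by
  simp [d3, det2, Prod.fst_sub, Prod.snd_sub, Prod.fst_add, Prod.snd_add,
    Prod.smul_fst, Prod.smul_snd, smul_eq_mul]; ring

lemma d3_aff2 (x p q z : ℝ × ℝ) (t : ℝ) :
    d3 x (p + t • (q - p)) z = (1 - t) * d3 x p z + t * d3 x q z := by
  simp [d3, det2, Prod.fst_sub, Prod.snd_sub, Prod.fst_add, Prod.snd_add,
    Prod.smul_fst, Prod.smul_snd, smul_eq_mul]; ring

lemma d3_aff3 (x y p q : ℝ × ℝ) (t : ℝ) :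
    d3 x y (p + t • (q - p)) = (1 - t) * d3 x y p + t * d3 x y q := by
  simp [d3, det2, Prod.fst_sub, Prod.snd_sub, Prod.fst_add, Prod.snd_add,
    Prod.smul_fst, Prod.smul_snd, smul_eq_mul]; ring

lemma d3_same12 (p q z : ℝ × ℝ) (a b : ℝ) :
    d3 (p + a • (q - p)) (p + b • (q - p)) z = (b - a) * d3 p q z := by
  simp [d3, det2, Prod.fst_sub, Prod.snd_sub, Prod.fst_add, Prod.snd_add,
    Prod.smul_fst, Prod.smul_snd, smul_eq_mul]; ring

lemma d3_same23 (z p q : ℝ × ℝ) (a b : ℝ) :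
    d3 z (p + a • (q - p)) (p + b • (q - p)) = (b - a) * d3 z p q := by
  simp [d3, det2, Prod.fst_sub, Prod.snd_sub, Prod.fst_add, Prod.snd_add,
    Prod.smul_fst, Prod.smul_snd, smul_eq_mul]; ring

lemma lineInter_mem (a b c d : ℝ × ℝ) (hc : 0 < d3 a b c) (hd : d3 a b d < 0) :
    ∃ s ∈ Set.Ioo (0:ℝ) 1, lineInter a b c d = c + s • (d - c) := by
  have hab : d3 a b c - d3 a b d > 0 := by linarith
  refine ⟨d3 a b c / (d3 a b c - d3 a b d), ⟨div_pos hc hab, ?_⟩, ?_⟩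
  · rw [div_lt_one hab]; linarith
  · have hD : det2 (b - a) (d - c) ≠ 0 := by
      have : det2 (b - a) (d - c) = d3 a b d - d3 a b c := by
        simp [d3, det2, Prod.fst_sub, Prod.snd_sub]; ring
      rw [this]; intro h; nlinarith
    have hD' : d3 a b c - d3 a b d ≠ 0 := by positivity
    simp only [lineInter, d3, det2, Prod.ext_iff, Prod.fst_add, Prod.snd_add,
      Prod.fst_sub, Prod.snd_sub, Prod.smul_fst, Prod.smul_snd, smul_eq_mul] at *
    have hD2 : (b.1 - a.1) * (c.2 - a.2) - (b.2 - a.2) * (c.1 - a.1) - ((b.1 - a.1) * (d.2 - a.2) - (b.2 - a.2) * (d.1 - a.1)) = -((b.1 - a.1) * (d.2 - c.2) - (b.2 - a.2) * (d.1 - c.1)) := by ring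
    rw [hD2]
    have hD3 : (d.2 - c.2) * (b.1 - a.1) - (d.1 - c.1) * (b.2 - a.2) ≠ 0 := by
      intro h; apply hD; linarith
    constructor <;> field_simp <;> ring

section M
variable {n : ℕ} {A : ℕ → ℝ × ℝ}

lemma hpos (hA : ConvexCyc n A) {i j l : ℕ} (h1 : 1 ≤ i) (h2 : i < j) (h3 : j < l)
    (h4 : l ≤ n) : 0 < d3 (A i) (A j) (A l) := hA i j l h1 h2 h3 h4

lemma hnonneg (hA : ConvexCyc n A) {i j l : ℕ} (h1 : 1 ≤ i) (h2 : i ≤ j) (h3 : j ≤ l)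
    (h4 : l ≤ n) : 0 ≤ d3 (A i) (A j) (A l) := by
  rcases eq_or_lt_of_le h2 with rfl | h2
  · rw [d3_self12]
  rcases eq_or_lt_of_le h3 with rfl | h3
  · rw [d3_self23]
  exact le_of_lt (hpos hA h1 h2 h3 h4)

lemma hwrap (hA : ConvexCyc n A) {i j : ℕ} (h1 : 1 ≤ i) (h2 : i ≤ j) (h3 : j ≤ n) :
    0 ≤ d3 (A i) (A j) (A 1) := by
  rw [d3_rot']
  exact hnonneg hA le_rfl h1 h2 h3


lemma combo_pos {c a T1 T2 : ℝ} (hc : 0 < c) (ha : 0 ≤ a) (hb : a < 1)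
    (h1 : 0 < T1) (h2 : 0 ≤ T2) : 0 < c * ((1 - a) * T1 + a * T2) :=
  mul_pos hc (by nlinarith [mul_pos (sub_pos.2 hb) h1, mul_nonneg ha h2])

lemma combo_pos' {c a T1 T2 : ℝ} (hc : 0 < c) (ha : 0 < a)
    (h1 : T1 = 0) (h2 : 0 < T2) : 0 < c * ((1 - a) * T1 + a * T2) := by
  rw [h1]; rw [mul_zero, zero_add]; exact mul_pos hc (mul_pos ha h2)

lemma boundary_ccw (hA : ConvexCyc n A) (hn : 3 ≤ n)
    (e1 e2 e3 : ℕ) (a1 a2 a3 : ℝ) (P1 P2 P3 : ℝ × ℝ)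
    (hP1 : P1 = A e1 + a1 • (A (e1 % n + 1) - A e1))
    (hP2 : P2 = A e2 + a2 • (A (e2 % n + 1) - A e2))
    (hP3 : P3 = A e3 + a3 • (A (e3 % n + 1) - A e3))
    (he1 : 1 ≤ e1) (h12 : e1 ≤ e2) (h23 : e2 ≤ e3) (he3 : e3 ≤ n)
    (ha1 : 0 ≤ a1) (hb1 : a1 < 1) (ha2 : 0 ≤ a2) (hb2 : a2 < 1)
    (ha3 : 0 ≤ a3) (hb3 : a3 < 1)
    (h13 : e1 < e3)
    (hl12 : e1 = e2 → a1 < a2) (hl23 : e2 = e3 → a2 < a3)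
    (hG2 : e1 = e2 → e3 = e2 + 1 → 0 < a3)
    (hG3 : e2 = e3 → e2 = n → 2 ≤ e1) :
    0 < d3 P1 P2 P3 := by
  have hmod : ∀ e, e < n → e % n + 1 = e + 1 := fun e he => by rw [Nat.mod_eq_of_lt he]
  have hmodn : n % n + 1 = 1 := by simp
  rcases eq_or_lt_of_le h12 with he12 | he12
  · -- Case B : e1 = e2 < e3
    subst he12
    have ha12 : a1 < a2 := hl12 rfl
    have he1n : e1 < n := lt_of_lt_of_le h13 he3
    rw [hmod e1 he1n] at hP1 hP2
    rw [hP1, hP2, d3_same12, hP3, d3_aff3]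
    have h1e3 : e1 + 1 ≤ e3 := h13
    rcases eq_or_lt_of_le h1e3 with he | he
    · -- e3 = e1 + 1
      have ha3' : 0 < a3 := hG2 rfl he.symm
      have hT1 : d3 (A e1) (A (e1+1)) (A e3) = 0 := by rw [← he, d3_self23]
      have hT2 : 0 < d3 (A e1) (A (e1+1)) (A (e3 % n + 1)) := by
        rcases eq_or_lt_of_le he3 with rfl | he3n
        · rw [hmodn, d3_rot']
          exact hpos hA (by omega) (by omega) (by omega) (by omega)
        · rw [hmod e3 he3n]
          exact hpos hA he1 (by omega) (by omega) (by omega)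
      exact combo_pos' (by linarith) ha3' hT1 hT2
    · -- e1 + 1 < e3
      have hT1 : 0 < d3 (A e1) (A (e1+1)) (A e3) := hpos hA he1 (by omega) he (by omega)
      have hT2 : 0 ≤ d3 (A e1) (A (e1+1)) (A (e3 % n + 1)) := by
        rcases eq_or_lt_of_le he3 with rfl | he3n
        · rw [hmodn]; exact hwrap hA he1 (by omega) (by omega)
        · rw [hmod e3 he3n]
          exact le_of_lt (hpos hA he1 (by omega) (by omega) (by omega))
      exact combo_pos (by linarith) ha3 hb3 hT1 hT2
  · rcases eq_or_lt_of_le h23 with he23 | he23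
    · -- Case C : e1 < e2 = e3
      subst he23
      have ha23 : a2 < a3 := hl23 rfl
      rw [hP2, hP3, d3_same23, hP1, d3_aff1]
      have he1n : e1 < n := by omega
      rw [hmod e1 he1n]
      rcases eq_or_lt_of_le he3 with rfl | he2n
      · -- e2 = n, wrap
        have he1' : 2 ≤ e1 := hG3 rfl rfl
        rw [hmodn]
        have hT1 : 0 < d3 (A e1) (A e2) (A 1) := by
          rw [d3_rot']; exact hpos hA le_rfl (by omega) he12 le_rfl
        have hT2 : 0 ≤ d3 (A (e1+1)) (A e2) (A 1) := hwrap hA (by omega) he12 le_rfl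
        exact combo_pos (by linarith) ha1 hb1 hT1 hT2
      · rw [hmod e2 he2n]
        have hT1 : 0 < d3 (A e1) (A e2) (A (e2+1)) := hpos hA he1 he12 (by omega) (by omega)
        have hT2 : 0 ≤ d3 (A (e1+1)) (A e2) (A (e2+1)) :=
          hnonneg hA (by omega) he12 (by omega) (by omega)
        exact combo_pos (by linarith) ha1 hb1 hT1 hT2
    · -- Case A : e1 < e2 < e3
      have he1n : e1 < n := by omega
      have he2n : e2 < n := by omega
      rw [hmod e1 he1n] at hP1
      rw [hmod e2 he2n] at hP2
      have A1nn : ∀ g2 g3, e1 < g2 → g2 ≤ g3 → g3 ≤ n → 0 ≤ d3 P1 (A g2) (A g3) := by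
        intro g2 g3 hg2 hg23 hg3
        rw [hP1, d3_aff1]
        have t1 := hnonneg hA (i := e1) (j := g2) (l := g3) he1 (by omega) hg23 hg3
        have t2 := hnonneg hA (i := e1+1) (j := g2) (l := g3) (by omega) (by omega) hg23 hg3
        nlinarith
      have A1s : ∀ g2 g3, e1 < g2 → g2 < g3 → g3 ≤ n → 0 < d3 P1 (A g2) (A g3) := by
        intro g2 g3 hg2 hg23 hg3
        rw [hP1, d3_aff1]
        have t1 := hpos hA (i := e1) (j := g2) (l := g3) he1 hg2 hg23 hg3
        have t2 := hnonneg hA (i := e1+1) (j := g2) (l := g3) (by omega) (by omega)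
          (by omega) hg3
        nlinarith
      have A1w : ∀ g2, e1 < g2 → g2 ≤ n → 0 ≤ d3 P1 (A g2) (A 1) := by
        intro g2 hg2 hg2n
        rw [hP1, d3_aff1]
        have t1 := hwrap hA (i := e1) (j := g2) he1 (by omega) hg2n
        have t2 := hwrap hA (i := e1+1) (j := g2) (by omega) (by omega) hg2n
        nlinarith
      have B2s : ∀ g3, e2 < g3 → g3 ≤ n → 0 < d3 P1 P2 (A g3) := by
        intro g3 hg3 hg3n
        rw [hP2, d3_aff2]
        have t1 := A1s e2 g3 he12 hg3 hg3n
        have t2 := A1nn (e2+1) g3 (by omega) (by omega) hg3n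
        nlinarith
      have B2w : 0 ≤ d3 P1 P2 (A 1) := by
        rw [hP2, d3_aff2]
        have t1 := A1w e2 he12 (by omega)
        have t2 := A1w (e2+1) (by omega) (by omega)
        nlinarith
      rw [hP3, d3_aff3]
      have t1 := B2s e3 he23 he3
      have t2 : 0 ≤ d3 P1 P2 (A (e3 % n + 1)) := by
        rcases eq_or_lt_of_le he3 with rfl | he3n
        · rw [hmodn]; exact B2w
        · rw [hmod e3 he3n]
          exact le_of_lt (B2s (e3+1) (by omega) (by omega))
      nlinarith
end M

lemma beta_neg (a p x b w : ℝ × ℝ) (t s : ℝ) (ht : 0 < t) (hs : 0 < s)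
    (hb : b = a + t • (p - a)) (hw : w = b + s • (x - b))
    (h3 : 0 < d3 a p x) : d3 a w b < 0 := by
  have e1 : d3 a w b = - d3 a b w := d3_swap _ _ _
  have e2 : d3 a b w = t * d3 a p w := by
    rw [hb, d3_aff2, d3_self12]; ring
  have e3 : d3 a p w = (1 - s) * d3 a p b + s * d3 a p x := by rw [hw, d3_aff3]
  have e4 : d3 a p b = 0 := by
    rw [hb, d3_aff3, d3_self13, d3_self23]; ring
  rw [e1, e2, e3, e4]
  have := mul_pos ht (mul_pos hs h3)
  nlinarith
lemma alpha_pos (q a p x b w c : ℝ × ℝ) (u t s : ℝ) (hu : 0 < u) (hu1 : u < 1)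
    (ht : 0 < t) (ht1 : t < 1) (hs : 0 < s) (hs1 : s < 1)
    (hb : b = a + t • (p - a)) (hw : w = b + s • (x - b)) (hc : c = q + u • (a - q))
    (h1 : 0 < d3 a p q) (h2 : 0 < d3 a x q) : 0 < d3 a w c := by
  have e1 : d3 a w c = (1 - u) * d3 a w q := by
    rw [hc]
    have : q + u • (a - q) = q + u • (a - q) := rfl
    rw [d3_aff3, d3_self13]; ring
  have e2 : d3 a w q = (1 - s) * d3 a b q + s * d3 a x q := by rw [hw, d3_aff2]
  have e3 : d3 a b q = t * d3 a p q := by rw [hb, d3_aff2, d3_self12]; ring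
  rw [e1, e2, e3]
  have p1 := mul_pos ht h1
  nlinarith [mul_pos (mul_pos (sub_pos.2 hs1) ht) h1, mul_pos hs h2,
    mul_pos (sub_pos.2 hu1) (mul_pos (mul_pos (sub_pos.2 hs1) ht) h1)]

section Pres
variable {n k : ℕ} {A B : ℕ → ℝ × ℝ}

lemma seed_preserved (hn : 4 ≤ n) (hk1 : 1 ≤ k) (hkn : k ≤ n - 1)
    (hS : IsSeed n k A B) :
    IsSeed n k (seedMap n k (A, B)).1 (seedMap n k (A, B)).2 := by
  obtain ⟨hA, hB⟩ := hS
  set Ast : ℕ → ℝ × ℝ := fun i => if i ≤ n - k then A (i + 1) else B i with hAst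
  have hfst : (seedMap n k (A, B)).1 = Ast := rfl
  have hsnd : ∀ j, (seedMap n k (A, B)).2 j = BstAux n A Ast (n - j) := fun j => rfl
  have hd1 : 1 ≤ n - k := by omega
  -- representation of Ast points on the boundary
  have hrepr : ∀ i, 1 ≤ i → i ≤ n → ∃ e : ℕ, ∃ a : ℝ,
      Ast i = A e + a • (A (e % n + 1) - A e) ∧ 0 ≤ a ∧ a < 1 ∧
      ((i ≤ n - k ∧ e = i + 1 ∧ a = 0) ∨ (n - k < i ∧ e = i ∧ 0 < a)) := by
    intro i h1 h2
    by_cases hi : i ≤ n - k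
    · refine ⟨i + 1, 0, ?_, le_rfl, one_pos, Or.inl ⟨hi, rfl, rfl⟩⟩
      simp [hAst, hi]
    · obtain ⟨t, ht, hBt⟩ := hB i (by omega) h2
      refine ⟨i, t, ?_, le_of_lt ht.1, ht.2, Or.inr ⟨by omega, rfl, ht.1⟩⟩
      simp only [hAst, if_neg hi]
      exact hBt
  have hconv : ConvexCyc n Ast := by
    intro i j l h1 hij hjl hln
    obtain ⟨ei, ai, hPi, hai0, hai1, hi⟩ := hrepr i h1 (by omega)
    obtain ⟨ej, aj, hPj, haj0, haj1, hj⟩ := hrepr j (by omega) (by omega)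
    obtain ⟨el, al, hPl, hal0, hal1, hl⟩ := hrepr l (by omega) hln
    show 0 < d3 (Ast i) (Ast j) (Ast l)
    refine boundary_ccw hA (by omega) ei ej el ai aj al _ _ _ hPi hPj hPl
      ?_ ?_ ?_ ?_ hai0 hai1 haj0 haj1 hal0 hal1 ?_ ?_ ?_ ?_ ?_
    · rcases hi with ⟨_,rfl,_⟩|⟨_,rfl,_⟩ <;> omega
    · rcases hi with ⟨_,rfl,_⟩|⟨_,rfl,_⟩ <;> rcases hj with ⟨_,rfl,_⟩|⟨_,rfl,_⟩ <;> omega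
    · rcases hj with ⟨_,rfl,_⟩|⟨_,rfl,_⟩ <;> rcases hl with ⟨_,rfl,_⟩|⟨_,rfl,_⟩ <;> omega
    · rcases hl with ⟨_,rfl,_⟩|⟨_,rfl,_⟩ <;> omega
    · rcases hi with ⟨_,rfl,_⟩|⟨_,rfl,_⟩ <;> rcases hl with ⟨_,rfl,_⟩|⟨_,rfl,_⟩ <;> omega
    · intro h
      rcases hi with ⟨hi1,rfl,hi3⟩|⟨hi1,rfl,hi3⟩ <;>
        rcases hj with ⟨hj1,rfl,hj3⟩|⟨hj1,rfl,hj3⟩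
      · omega
      · rw [hi3]; exact hj3
      · omega
      · omega
    · intro h
      rcases hj with ⟨hj1,rfl,hj3⟩|⟨hj1,rfl,hj3⟩ <;>
        rcases hl with ⟨hl1,rfl,hl3⟩|⟨hl1,rfl,hl3⟩
      · omega
      · rw [hj3]; exact hl3
      · omega
      · omega
    · intro h h'
      rcases hl with ⟨hl1,rfl,hl3⟩|⟨hl1,rfl,hl3⟩
      · rcases hi with ⟨hi1,rfl,hi3⟩|⟨hi1,rfl,hi3⟩ <;>
          rcases hj with ⟨hj1,rfl,hj3⟩|⟨hj1,rfl,hj3⟩ <;> omega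
      · exact hl3
    · intro _ _
      rcases hi with ⟨hi1,rfl,hi3⟩|⟨hi1,rfl,hi3⟩ <;> omega
  have hd2 : n - k + 1 ≤ n := by omega
  have hmodn : n % n + 1 = 1 := by simp
  have hA1 : Ast 1 = A 2 := by simp only [hAst]; rw [if_pos hd1]
  have hAbig : ∀ j, n - k < j → Ast j = B j := by
    intro j hj; simp only [hAst]; rw [if_neg (by omega)]
  have hInv : ∀ dd, dd ≤ k - 1 → ∃ s ∈ Set.Ioo (0:ℝ) 1,
      BstAux n A Ast dd = Ast (n - dd) + s • (Ast ((n - dd) % n + 1) - Ast (n - dd)) := by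
    intro dd
    induction dd with
    | zero =>
      intro _
      simp only [Nat.sub_zero, hmodn]
      obtain ⟨u, hu, hBn⟩ := hB n hd2 le_rfl
      rw [hmodn] at hBn
      have hAn : Ast n = B n := hAbig n (by omega)
      -- the second vertex of the new polygon
      have hc : 0 < d3 (A 1) (Ast 2) (Ast n) ∧ d3 (A 1) (Ast 2) (Ast 1) < 0 := by
        have key : 0 < d3 (A 1) (Ast 2) (A n) ∧ d3 (A 1) (Ast 2) (A 2) < 0 := by
          by_cases h2k : 2 ≤ n - k
          · have hA2 : Ast 2 = A 3 := by simp only [hAst]; rw [if_pos h2k]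
            rw [hA2]
            constructor
            · exact hpos hA (by omega) (by omega) (by omega) (by omega)
            · rw [d3_swap]
              have := hpos hA (i := 1) (j := 2) (l := 3) (by omega) (by omega)
                (by omega) (by omega)
              linarith
          · obtain ⟨t, ht, hB2⟩ := hB 2 (by omega) (by omega)
            have h23 : 2 % n + 1 = 3 := by rw [Nat.mod_eq_of_lt (by omega)]
            rw [h23] at hB2
            have hA2 : Ast 2 = B 2 := hAbig 2 (by omega)
            rw [hA2, hB2]
            constructor
            · rw [d3_aff2]
              have p1 := hpos hA (i := 1) (j := 2) (l := n) (by omega) (by omega)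
                (by omega) (by omega)
              have p2 := hpos hA (i := 1) (j := 3) (l := n) (by omega) (by omega)
                (by omega) (by omega)
              nlinarith [ht.1, ht.2, mul_pos ht.1 p2]
            · rw [d3_aff2, d3_self23]
              have p1 := hpos hA (i := 1) (j := 2) (l := 3) (by omega) (by omega)
                (by omega) (by omega)
              have e : d3 (A 1) (A 3) (A 2) = - d3 (A 1) (A 2) (A 3) := d3_swap _ _ _
              rw [e]
              nlinarith [mul_pos ht.1 p1]
        constructor
        · rw [hAn, hBn, d3_aff3, d3_self13]
          nlinarith [key.1, hu.1, hu.2, mul_pos (sub_pos.2 hu.2) key.1]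
        · rw [hA1]; exact key.2
      obtain ⟨s, hsIoo, heq⟩ := lineInter_mem (A 1) (Ast 2) (Ast n) (Ast 1) hc.1 hc.2
      exact ⟨s, hsIoo, heq⟩
    | succ dd ih =>
      intro hdd
      obtain ⟨s, hsIoo, hW⟩ := ih (by omega)
      set W := BstAux n A Ast dd with hWdef
      set j := n - dd - 1 with hjdef
      have hj1 : n - dd = j + 1 := by omega
      have hjk : n - k + 1 ≤ j := by omega
      have hjn : j + 1 ≤ n := by omega
      have hj2 : 2 ≤ j := by omega
      have hjmod : j % n + 1 = j + 1 := by rw [Nat.mod_eq_of_lt (by omega)]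
      have hgoal : BstAux n A Ast (dd + 1)
          = lineInter (A (j + 1)) W (Ast j) (Ast (j + 1)) := by
        show lineInter (A (n - dd)) W (Ast (n - dd - 1)) (Ast (n - dd)) = _
        rw [hj1]
        norm_num
      obtain ⟨u, hu, hBj⟩ := hB j hjk (by omega)
      rw [hjmod] at hBj
      have hAj : Ast j = B j := hAbig j (by omega)
      have hAj1 : Ast (j + 1) = B (j + 1) := hAbig (j + 1) (by omega)
      obtain ⟨t, ht, hBj1⟩ := hB (j + 1) (by omega) hjn
      rw [hj1] at hW
      -- identify X := Ast ((j+1) % n + 1) and the key vertex positivity facts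
      have key : ∃ X : ℝ × ℝ, Ast ((j + 1) % n + 1) = X ∧
          0 < d3 (A (j + 1)) (A ((j + 1) % n + 1)) (A j) ∧
          0 < d3 (A (j + 1)) X (A j) ∧
          0 < d3 (A (j + 1)) (A ((j + 1) % n + 1)) X := by
        rcases eq_or_lt_of_le hjn with hjn' | hjn'
        · -- j + 1 = n : X = Ast 1 = A 2
          refine ⟨A 2, by rw [hjn', hmodn, hA1], ?_, ?_, ?_⟩
          · rw [hjn', hmodn]
            rw [d3_rot]
            exact hpos hA (by omega) (by omega) (by omega) (by omega)
          · rw [hjn']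
            rw [d3_rot]
            exact hpos hA (i := 2) (j := j) (l := n) (by omega) (by omega)
              (by omega) (by omega)
          · rw [hjn', hmodn]
            rw [d3_rot]
            exact hpos hA (i := 1) (j := 2) (l := n) (by omega) (by omega)
              (by omega) (by omega)
        · -- j + 1 < n : X = Ast (j+2) = B (j+2)
          have hm : (j + 1) % n + 1 = j + 2 := by rw [Nat.mod_eq_of_lt hjn']
          obtain ⟨v, hv, hBj2⟩ := hB (j + 2) (by omega) (by omega)
          have hAj2 : Ast (j + 2) = B (j + 2) := hAbig (j + 2) (by omega)
          have hp1 : 0 < d3 (A (j + 1)) (A (j + 2)) (A j) := by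
            rw [d3_rot']
            exact hpos hA (by omega) (by omega) (by omega) (by omega)
          have hfar : 0 < d3 (A (j + 1)) (A ((j + 2) % n + 1)) (A j) := by
            rcases eq_or_lt_of_le (show j + 2 ≤ n by omega) with h2n | h2n
            · rw [h2n, hmodn, d3_rot]
              exact hpos hA (i := 1) (j := j) (l := j + 1) (by omega) (by omega)
                (by omega) (by omega)
            · rw [Nat.mod_eq_of_lt h2n, d3_rot']
              exact hpos hA (i := j) (j := j + 1) (l := j + 3) (by omega) (by omega)
                (by omega) (by omega)
          have hfar2 : 0 < d3 (A (j + 1)) (A (j + 2)) (A ((j + 2) % n + 1)) := by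
            rcases eq_or_lt_of_le (show j + 2 ≤ n by omega) with h2n | h2n
            · rw [h2n, hmodn, d3_rot']
              exact hpos hA (i := 1) (j := j + 1) (l := n) (by omega) (by omega)
                (by omega) (by omega)
            · rw [Nat.mod_eq_of_lt h2n]
              exact hpos hA (by omega) (by omega) (by omega) (by omega)
          refine ⟨B (j + 2), by rw [hm, hAj2], by rw [hm]; exact hp1, ?_, ?_⟩
          · rw [hBj2, d3_aff2]
            nlinarith [hv.1, hv.2, mul_pos (sub_pos.2 hv.2) hp1, mul_pos hv.1 hfar]
          · rw [hm, hBj2, d3_aff3, d3_self23]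
            nlinarith [mul_pos hv.1 hfar2]
      obtain ⟨X, hX, h1, h2, h3⟩ := key
      rw [hX] at hW
      rw [hAj1] at hW
      have hbneg : d3 (A (j + 1)) W (B (j + 1)) < 0 := by
        refine beta_neg (A (j + 1)) (A ((j + 1) % n + 1)) X (B (j + 1)) W t s
          ht.1 hsIoo.1 hBj1 hW h3
      have hapos : 0 < d3 (A (j + 1)) W (B j) :=
        alpha_pos (A j) (A (j + 1)) (A ((j + 1) % n + 1)) X (B (j + 1)) W (B j)
          u t s hu.1 hu.2 ht.1 ht.2 hsIoo.1 hsIoo.2 hBj1 hW hBj h1 h2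
      rw [← hAj] at hapos
      rw [← hAj1] at hbneg
      obtain ⟨s', hs', heq⟩ := lineInter_mem (A (j + 1)) W (Ast j) (Ast (j + 1))
        hapos hbneg
      refine ⟨s', hs', ?_⟩
      have hj3 : n - (dd + 1) = j := by omega
      rw [hgoal, heq, hj3, hjmod]
  constructor
  · exact hconv
  · intro j hj1 hj2
    have : (seedMap n k (A, B)).2 j = BstAux n A Ast (n - j) := rfl
    rw [this]
    obtain ⟨s, hs, heq⟩ := hInv (n - j) (by omega)
    have e : n - (n - j) = j := by omega
    rw [e] at heq
    exact ⟨s, hs, heq⟩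
end Pres

lemma comboA {a T1 T2 : ℝ} (h0 : 0 ≤ a) (h1 : a < 1) (hT1 : 0 < T1) (hT2 : 0 ≤ T2) :
    0 < (1 - a) * T1 + a * T2 := by nlinarith [mul_pos (sub_pos.2 h1) hT1, mul_nonneg h0 hT2]

lemma comboB {a T1 T2 : ℝ} (h0 : 0 < a) (hT1 : T1 = 0) (hT2 : 0 < T2) :
    0 < (1 - a) * T1 + a * T2 := by rw [hT1, mul_zero, zero_add]; exact mul_pos h0 hT2

section Five
variable {n k : ℕ}

lemma seed_preserved' (hn : 4 ≤ n) (hk1 : 1 ≤ k) (hkn : k ≤ n - 1)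
    (S : (ℕ → ℝ × ℝ) × (ℕ → ℝ × ℝ)) (hS : IsSeed n k S.1 S.2) :
    IsSeed n k (seedMap n k S).1 (seedMap n k S).2 := by
  obtain ⟨A, B⟩ := S; exact seed_preserved hn hk1 hkn hS

lemma iter_fst : ∀ (i : ℕ) (S : (ℕ → ℝ × ℝ) × (ℕ → ℝ × ℝ)) (j : ℕ), 1 ≤ j →
    i + j ≤ n - k + 1 → ((seedMap n k)^[i] S).1 j = S.1 (i + j) := by
  intro i
  induction i with
  | zero => intro S j h1 h2; simp
  | succ i ih =>
    intro S j h1 h2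
    rw [Function.iterate_succ_apply]
    rw [ih (seedMap n k S) j h1 (by omega)]
    have hle : i + j ≤ n - k := by omega
    have : (seedMap n k S).1 (i + j) = S.1 (i + j + 1) := by
      show (if i + j ≤ n - k then S.1 (i + j + 1) else S.2 (i + j)) = _
      rw [if_pos hle]
    rw [this]
    have e : i + 1 + j = i + j + 1 := by omega
    rw [e]

lemma iter_deep (i : ℕ) (S : (ℕ → ℝ × ℝ) × (ℕ → ℝ × ℝ)) (hi : n - k < i) (hd : 1 ≤ n - k) :
    ((seedMap n k)^[i] S).1 1 = ((seedMap n k)^[i - (n - k) - 1] S).2 (n - k + 1) := by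
  obtain ⟨m, rfl⟩ : ∃ m, i = (n - k) + (m + 1) := ⟨i - (n - k) - 1, by omega⟩
  rw [Function.iterate_add_apply]
  rw [iter_fst (n - k) _ 1 le_rfl (by omega)]
  rw [Function.iterate_succ_apply']
  show (if n - k + 1 ≤ n - k then _ else ((seedMap n k)^[m] S).2 (n - k + 1)) = _
  rw [if_neg (by omega)]
  have e : n - k + (m + 1) - (n - k) - 1 = m := by omega
  rw [e]

set_option maxHeartbeats 3200000 in
lemma five_conv (hn : 4 ≤ n) (hk1 : 1 ≤ k) (hkn : k ≤ n - 1) (hne : ¬(n = 4 ∧ k = 1))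
    (S : (ℕ → ℝ × ℝ) × (ℕ → ℝ × ℝ)) (hS : IsSeed n k S.1 S.2) :
    ∀ a b c : ℕ, a < b → b < c → c ≤ 4 →
      0 < d3 (((seedMap n k)^[a] S).1 1) (((seedMap n k)^[b] S).1 1)
        (((seedMap n k)^[c] S).1 1) := by
  have hd1 : 1 ≤ n - k := by omega
  set d := n - k with hd
  set C : ℕ → ℝ × ℝ := S.1 with hC
  have hS1 : IsSeed n k (seedMap n k S).1 (seedMap n k S).2 :=
    seed_preserved' hn hk1 hkn S hS
  have hS2 : IsSeed n k ((seedMap n k)^[2] S).1 ((seedMap n k)^[2] S).2 := by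
    rw [show (2:ℕ) = 1 + 1 from rfl, Function.iterate_add_apply]
    exact seed_preserved' hn hk1 hkn _ (by simpa using hS1)
  have hA := hS.1
  have hv : ∀ i j l : ℕ, 1 ≤ i → i < j → j < l → l ≤ n → 0 < d3 (C i) (C j) (C l) :=
    fun i j l h1 h2 h3 h4 => hpos hA h1 h2 h3 h4
  have hn5 : n = 4 ∨ 5 ≤ n := by omega
  -- the wrap vertex index
  have hwv : (n = 4 ∧ 4 % n + 1 = 1) ∨ (5 ≤ n ∧ 4 % n + 1 = 5) := by
    rcases hn5 with h | h
    · left; refine ⟨h, ?_⟩; subst h; rfl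
    · right; exact ⟨h, by rw [Nat.mod_eq_of_lt (by omega)]⟩
  set r : ℕ → ℝ × ℝ := fun i => ((seedMap n k)^[i] S).1 1 with hrdef
  have h0 : r 0 = C 1 := by simp [hrdef, hC]
  have h1 : r 1 = C 2 := iter_fst 1 S 1 le_rfl (by omega)
  intro a b c hab hbc hc4
  show 0 < d3 (r a) (r b) (r c)
  have hd4 : 4 ≤ d ∨ d = 3 ∨ d = 2 ∨ d = 1 := by omega
  rcases hd4 with hd4 | hd4 | hd4 | hd4
  · -- d ≥ 4 : all five points are vertices
    have hid : ∀ i, i ≤ 4 → r i = C (i + 1) := by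
      intro i hi
      have := iter_fst (n := n) (k := k) i S 1 le_rfl (by omega)
      simpa [hrdef, hC] using this
    rw [hid a (by omega), hid b (by omega), hid c (by omega)]
    exact hv _ _ _ (by omega) (by omega) (by omega) (by omega)
  · -- d = 3
    have hn5' : 5 ≤ n := by omega
    have h2 : r 2 = C 3 := iter_fst 2 S 1 le_rfl (by omega)
    have h3 : r 3 = C 4 := iter_fst 3 S 1 le_rfl (by omega)
    have h4' : r 4 = S.2 4 := by
      have := iter_deep (n := n) (k := k) 4 S (by omega) (by omega)
      simp only [hrdef]
      rw [this]
      have e4 : 4 - (n - k) - 1 = 0 := by omega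
      have e5 : n - k + 1 = 4 := by omega
      rw [e4, e5, Function.iterate_zero_apply]
    obtain ⟨t, ht, hB⟩ := hS.2 4 (by omega) (by omega)
    rw [Nat.mod_eq_of_lt (by omega : 4 < n)] at hB
    have h4 : r 4 = C 4 + t • (C 5 - C 4) := by rw [h4', hB]
    have hC4 : ∀ x y : ℕ, 1 ≤ x → x < y → y ≤ 3 →
        0 < d3 (C x) (C y) (C 4 + t • (C 5 - C 4)) := by
      intro x y hx hxy hy3
      rw [d3_aff3]
      exact comboA (le_of_lt ht.1) ht.2 (hv x y 4 hx hxy (by omega) (by omega))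
        (le_of_lt (hv x y 5 hx hxy (by omega) (by omega)))
    have hC4' : ∀ x : ℕ, 1 ≤ x → x ≤ 3 →
        0 < d3 (C x) (C 4) (C 4 + t • (C 5 - C 4)) := by
      intro x hx hx3
      rw [d3_aff3, d3_self23]
      exact comboB ht.1 rfl (hv x 4 5 hx (by omega) (by omega) (by omega))
    have hA2 : a ≤ 2 := by omega
    have hB3' : b ≤ 3 := by omega
    interval_cases a <;> interval_cases b <;> interval_cases c <;>
      simp only [h0, h1, h2, h3, h4] <;>
      first
        | exact hv _ _ _ (by omega) (by omega) (by omega) (by omega)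
        | exact hC4 _ _ (by omega) (by omega) (by omega)
        | exact hC4' _ (by omega) (by omega)
  · -- d = 2
    have h2 : r 2 = C 3 := iter_fst 2 S 1 le_rfl (by omega)
    set B3 := S.2 3 with hB3def
    set B4 := S.2 4 with hB4def
    set R4 := (seedMap n k S).2 3 with hR4def
    have h3 : r 3 = B3 := by
      have := iter_deep (n := n) (k := k) 3 S (by omega) (by omega)
      simp only [hrdef]
      rw [this]
      have e4 : 3 - (n - k) - 1 = 0 := by omega
      have e5 : n - k + 1 = 3 := by omega
      rw [e4, e5, Function.iterate_zero_apply]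
    have h4 : r 4 = R4 := by
      have := iter_deep (n := n) (k := k) 4 S (by omega) (by omega)
      simp only [hrdef]
      rw [this]
      have e4 : 4 - (n - k) - 1 = 1 := by omega
      have e5 : n - k + 1 = 3 := by omega
      rw [e4, e5, Function.iterate_one]
    obtain ⟨t3, ht3, hB3⟩ := hS.2 3 (by omega) (by omega)
    rw [Nat.mod_eq_of_lt (by omega : 3 < n)] at hB3
    rw [← hB3def] at hB3
    norm_num at hB3
    obtain ⟨t4, ht4, hB4⟩ := hS.2 4 (by omega) (by omega)
    rw [← hB4def] at hB4
    obtain ⟨s, hs, hR4⟩ := hS1.2 3 (by omega) (by omega)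
    rw [Nat.mod_eq_of_lt (by omega : 3 < n)] at hR4
    rw [← hR4def] at hR4
    norm_num at hR4
    have eT3 : (seedMap n k S).1 3 = B3 := by
      show (if 3 ≤ n - k then S.1 (3 + 1) else S.2 3) = B3
      rw [if_neg (by omega)]
    have eT4 : (seedMap n k S).1 4 = B4 := by
      show (if 4 ≤ n - k then S.1 (4 + 1) else S.2 4) = B4
      rw [if_neg (by omega)]
    rw [eT3, eT4] at hR4
    -- wrap-vertex facts
    have F1 : 0 ≤ d3 (C 1) (C 2) (C (4 % n + 1)) := by
      rcases hwv with ⟨h4n, hw⟩ | ⟨h5n, hw⟩ <;> rw [hw]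
      · rw [d3_self13]
      · exact le_of_lt (hv 1 2 5 (by omega) (by omega) (by omega) (by omega))
    have F2 : 0 < d3 (C 2) (C 3) (C (4 % n + 1)) := by
      rcases hwv with ⟨h4n, hw⟩ | ⟨h5n, hw⟩ <;> rw [hw]
      · rw [d3_rot']; exact hv 1 2 3 (by omega) (by omega) (by omega) (by omega)
      · exact hv 2 3 5 (by omega) (by omega) (by omega) (by omega)
    have F3 : 0 ≤ d3 (C 1) (C 3) (C (4 % n + 1)) := by
      rcases hwv with ⟨h4n, hw⟩ | ⟨h5n, hw⟩ <;> rw [hw]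
      · rw [d3_self13]
      · exact le_of_lt (hv 1 3 5 (by omega) (by omega) (by omega) (by omega))
    have F5 : 0 < d3 (C 3) (C 4) (C (4 % n + 1)) := by
      rcases hwv with ⟨h4n, hw⟩ | ⟨h5n, hw⟩ <;> rw [hw]
      · rw [d3_rot']; exact hv 1 3 4 (by omega) (by omega) (by omega) (by omega)
      · exact hv 3 4 5 (by omega) (by omega) (by omega) (by omega)
    have F6 : 0 < d3 (C 2) (C 4) (C (4 % n + 1)) := by
      rcases hwv with ⟨h4n, hw⟩ | ⟨h5n, hw⟩ <;> rw [hw]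
      · rw [d3_rot']; exact hv 1 2 4 (by omega) (by omega) (by omega) (by omega)
      · exact hv 2 4 5 (by omega) (by omega) (by omega) (by omega)
    have F7 : 0 ≤ d3 (C 1) (C 4) (C (4 % n + 1)) := by
      rcases hwv with ⟨h4n, hw⟩ | ⟨h5n, hw⟩ <;> rw [hw]
      · rw [d3_self13]
      · exact le_of_lt (hv 1 4 5 (by omega) (by omega) (by omega) (by omega))
    -- facts about B3
    have g013 : 0 < d3 (C 1) (C 2) B3 := by
      rw [hB3, d3_aff3]
      exact comboA (le_of_lt ht3.1) ht3.2
        (hv 1 2 3 (by omega) (by omega) (by omega) (by omega))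
        (le_of_lt (hv 1 2 4 (by omega) (by omega) (by omega) (by omega)))
    have g023 : 0 < d3 (C 1) (C 3) B3 := by
      rw [hB3, d3_aff3, d3_self23]
      exact comboB ht3.1 rfl (hv 1 3 4 (by omega) (by omega) (by omega) (by omega))
    have g123 : 0 < d3 (C 2) (C 3) B3 := by
      rw [hB3, d3_aff3, d3_self23]
      exact comboB ht3.1 rfl (hv 2 3 4 (by omega) (by omega) (by omega) (by omega))
    -- facts about B4
    have q14 : 0 < d3 (C 1) (C 2) B4 := by
      rw [hB4, d3_aff3]
      exact comboA (le_of_lt ht4.1) ht4.2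
        (hv 1 2 4 (by omega) (by omega) (by omega) (by omega)) F1
    have q24 : 0 < d3 (C 1) (C 3) B4 := by
      rw [hB4, d3_aff3]
      exact comboA (le_of_lt ht4.1) ht4.2
        (hv 1 3 4 (by omega) (by omega) (by omega) (by omega)) F3
    have q34 : 0 < d3 (C 2) (C 3) B4 := by
      rw [hB4, d3_aff3]
      exact comboA (le_of_lt ht4.1) ht4.2
        (hv 2 3 4 (by omega) (by omega) (by omega) (by omega)) (le_of_lt F2)
    have q44 : 0 ≤ d3 (C 1) (C 4) B4 := by
      rw [hB4, d3_aff3, d3_self23]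
      nlinarith [mul_nonneg (le_of_lt ht4.1) F7]
    have q64 : 0 < d3 (C 2) (C 4) B4 := by
      rw [hB4, d3_aff3, d3_self23]
      exact comboB ht4.1 rfl F6
    have q54 : 0 < d3 (C 3) (C 4) B4 := by
      rw [hB4, d3_aff3, d3_self23]
      exact comboB ht4.1 rfl F5
    -- facts about R4
    have g014 : 0 < d3 (C 1) (C 2) R4 := by
      rw [hR4, d3_aff3]
      exact comboA (le_of_lt hs.1) hs.2 g013 (le_of_lt q14)
    have g024 : 0 < d3 (C 1) (C 3) R4 := by
      rw [hR4, d3_aff3]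
      exact comboA (le_of_lt hs.1) hs.2 g023 (le_of_lt q24)
    have g124 : 0 < d3 (C 2) (C 3) R4 := by
      rw [hR4, d3_aff3]
      exact comboA (le_of_lt hs.1) hs.2 g123 (le_of_lt q34)
    have z1 : 0 < d3 (C 1) B3 B4 := by
      rw [hB3, d3_aff2]
      exact comboA (le_of_lt ht3.1) ht3.2 q24 q44
    have z2 : 0 < d3 (C 2) B3 B4 := by
      rw [hB3, d3_aff2]
      exact comboA (le_of_lt ht3.1) ht3.2 q34 (le_of_lt q64)
    have z3 : 0 < d3 (C 3) B3 B4 := by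
      rw [hB3, d3_aff2, d3_self12]
      exact comboB ht3.1 rfl q54
    have g034 : 0 < d3 (C 1) B3 R4 := by
      rw [hR4, d3_aff3, d3_self23]
      exact comboB hs.1 rfl z1
    have g134 : 0 < d3 (C 2) B3 R4 := by
      rw [hR4, d3_aff3, d3_self23]
      exact comboB hs.1 rfl z2
    have g234 : 0 < d3 (C 3) B3 R4 := by
      rw [hR4, d3_aff3, d3_self23]
      exact comboB hs.1 rfl z3
    have hA2 : a ≤ 2 := by omega
    have hB3' : b ≤ 3 := by omega
    interval_cases a <;> interval_cases b <;> interval_cases c <;>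
      simp only [h0, h1, h2, h3, h4]
    exacts [hv 1 2 3 (by omega) (by omega) (by omega) (by omega), g013, g014,
      g023, g024, g034, g123, g124, g134, g234]
  · -- d = 1
    set B2 := S.2 2 with hB2def
    set B3 := S.2 3 with hB3def
    set B4 := S.2 4 with hB4def
    set R3 := (seedMap n k S).2 2 with hR3def
    set Y := (seedMap n k S).2 3 with hYdef
    have hT2eq : (seedMap n k)^[2] S = seedMap n k (seedMap n k S) := by
      rw [show (2:ℕ) = 1 + 1 from rfl, Function.iterate_succ_apply', Function.iterate_one]
    set R4 := (seedMap n k (seedMap n k S)).2 2 with hR4def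
    have h2 : r 2 = B2 := by
      have := iter_deep (n := n) (k := k) 2 S (by omega) (by omega)
      simp only [hrdef]
      rw [this]
      have e4 : 2 - (n - k) - 1 = 0 := by omega
      have e5 : n - k + 1 = 2 := by omega
      rw [e4, e5, Function.iterate_zero_apply]
    have h3 : r 3 = R3 := by
      have := iter_deep (n := n) (k := k) 3 S (by omega) (by omega)
      simp only [hrdef]
      rw [this]
      have e4 : 3 - (n - k) - 1 = 1 := by omega
      have e5 : n - k + 1 = 2 := by omega
      rw [e4, e5, Function.iterate_one]
    have h4 : r 4 = R4 := by
      have := iter_deep (n := n) (k := k) 4 S (by omega) (by omega)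
      simp only [hrdef]
      rw [this]
      have e4 : 4 - (n - k) - 1 = 2 := by omega
      have e5 : n - k + 1 = 2 := by omega
      rw [e4, e5, hT2eq]
    obtain ⟨t2, ht2, hB2⟩ := hS.2 2 (by omega) (by omega)
    rw [Nat.mod_eq_of_lt (by omega : 2 < n)] at hB2
    rw [← hB2def] at hB2
    norm_num at hB2
    obtain ⟨t3, ht3, hB3⟩ := hS.2 3 (by omega) (by omega)
    rw [Nat.mod_eq_of_lt (by omega : 3 < n)] at hB3
    rw [← hB3def] at hB3
    norm_num at hB3
    obtain ⟨t4, ht4, hB4⟩ := hS.2 4 (by omega) (by omega)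
    rw [← hB4def] at hB4
    obtain ⟨s1, hs1, hR3⟩ := hS1.2 2 (by omega) (by omega)
    rw [Nat.mod_eq_of_lt (by omega : 2 < n)] at hR3
    rw [← hR3def] at hR3
    norm_num at hR3
    obtain ⟨u, hu, hY⟩ := hS1.2 3 (by omega) (by omega)
    rw [Nat.mod_eq_of_lt (by omega : 3 < n)] at hY
    rw [← hYdef] at hY
    norm_num at hY
    have hS2' : IsSeed n k (seedMap n k (seedMap n k S)).1 (seedMap n k (seedMap n k S)).2 := by
      rw [← hT2eq]; exact hS2
    obtain ⟨s2, hs2, hR4⟩ := hS2'.2 2 (by omega) (by omega)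
    rw [Nat.mod_eq_of_lt (by omega : 2 < n)] at hR4
    rw [← hR4def] at hR4
    norm_num at hR4
    have eT2 : (seedMap n k S).1 2 = B2 := by
      show (if 2 ≤ n - k then S.1 (2 + 1) else S.2 2) = B2
      rw [if_neg (by omega)]
    have eT3 : (seedMap n k S).1 3 = B3 := by
      show (if 3 ≤ n - k then S.1 (3 + 1) else S.2 3) = B3
      rw [if_neg (by omega)]
    have eT4 : (seedMap n k S).1 4 = B4 := by
      show (if 4 ≤ n - k then S.1 (4 + 1) else S.2 4) = B4
      rw [if_neg (by omega)]
    rw [eT2, eT3] at hR3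
    rw [eT3, eT4] at hY
    have eU2 : (seedMap n k (seedMap n k S)).1 2 = R3 := by
      show (if 2 ≤ n - k then (seedMap n k S).1 (2 + 1) else (seedMap n k S).2 2) = R3
      rw [if_neg (by omega)]
    have eU3 : (seedMap n k (seedMap n k S)).1 3 = Y := by
      show (if 3 ≤ n - k then (seedMap n k S).1 (3 + 1) else (seedMap n k S).2 3) = Y
      rw [if_neg (by omega)]
    rw [eU2, eU3] at hR4
    -- wrap-vertex facts
    have F1 : 0 ≤ d3 (C 1) (C 2) (C (4 % n + 1)) := by
      rcases hwv with ⟨h4n, hw⟩ | ⟨h5n, hw⟩ <;> rw [hw]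
      · rw [d3_self13]
      · exact le_of_lt (hv 1 2 5 (by omega) (by omega) (by omega) (by omega))
    have F2 : 0 < d3 (C 2) (C 3) (C (4 % n + 1)) := by
      rcases hwv with ⟨h4n, hw⟩ | ⟨h5n, hw⟩ <;> rw [hw]
      · rw [d3_rot']; exact hv 1 2 3 (by omega) (by omega) (by omega) (by omega)
      · exact hv 2 3 5 (by omega) (by omega) (by omega) (by omega)
    have F3 : 0 ≤ d3 (C 1) (C 3) (C (4 % n + 1)) := by
      rcases hwv with ⟨h4n, hw⟩ | ⟨h5n, hw⟩ <;> rw [hw]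
      · rw [d3_self13]
      · exact le_of_lt (hv 1 3 5 (by omega) (by omega) (by omega) (by omega))
    have F5 : 0 < d3 (C 3) (C 4) (C (4 % n + 1)) := by
      rcases hwv with ⟨h4n, hw⟩ | ⟨h5n, hw⟩ <;> rw [hw]
      · rw [d3_rot']; exact hv 1 3 4 (by omega) (by omega) (by omega) (by omega)
      · exact hv 3 4 5 (by omega) (by omega) (by omega) (by omega)
    have F6 : 0 < d3 (C 2) (C 4) (C (4 % n + 1)) := by
      rcases hwv with ⟨h4n, hw⟩ | ⟨h5n, hw⟩ <;> rw [hw]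
      · rw [d3_rot']; exact hv 1 2 4 (by omega) (by omega) (by omega) (by omega)
      · exact hv 2 4 5 (by omega) (by omega) (by omega) (by omega)
    have F7 : 0 ≤ d3 (C 1) (C 4) (C (4 % n + 1)) := by
      rcases hwv with ⟨h4n, hw⟩ | ⟨h5n, hw⟩ <;> rw [hw]
      · rw [d3_self13]
      · exact le_of_lt (hv 1 4 5 (by omega) (by omega) (by omega) (by omega))
    -- B-point facts
    have g012 : 0 < d3 (C 1) (C 2) B2 := by
      rw [hB2, d3_aff3, d3_self23]
      exact comboB ht2.1 rfl (hv 1 2 3 (by omega) (by omega) (by omega) (by omega))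
    have q123 : 0 < d3 (C 1) (C 2) B3 := by
      rw [hB3, d3_aff3]
      exact comboA (le_of_lt ht3.1) ht3.2
        (hv 1 2 3 (by omega) (by omega) (by omega) (by omega))
        (le_of_lt (hv 1 2 4 (by omega) (by omega) (by omega) (by omega)))
    have q133 : 0 < d3 (C 1) (C 3) B3 := by
      rw [hB3, d3_aff3, d3_self23]
      exact comboB ht3.1 rfl (hv 1 3 4 (by omega) (by omega) (by omega) (by omega))
    have q233 : 0 < d3 (C 2) (C 3) B3 := by
      rw [hB3, d3_aff3, d3_self23]
      exact comboB ht3.1 rfl (hv 2 3 4 (by omega) (by omega) (by omega) (by omega))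
    have q124 : 0 < d3 (C 1) (C 2) B4 := by
      rw [hB4, d3_aff3]
      exact comboA (le_of_lt ht4.1) ht4.2
        (hv 1 2 4 (by omega) (by omega) (by omega) (by omega)) F1
    have q134 : 0 < d3 (C 1) (C 3) B4 := by
      rw [hB4, d3_aff3]
      exact comboA (le_of_lt ht4.1) ht4.2
        (hv 1 3 4 (by omega) (by omega) (by omega) (by omega)) F3
    have q234 : 0 < d3 (C 2) (C 3) B4 := by
      rw [hB4, d3_aff3]
      exact comboA (le_of_lt ht4.1) ht4.2
        (hv 2 3 4 (by omega) (by omega) (by omega) (by omega)) (le_of_lt F2)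
    have q144 : 0 ≤ d3 (C 1) (C 4) B4 := by
      rw [hB4, d3_aff3, d3_self23]
      nlinarith [mul_nonneg (le_of_lt ht4.1) F7]
    have q244 : 0 < d3 (C 2) (C 4) B4 := by
      rw [hB4, d3_aff3, d3_self23]
      exact comboB ht4.1 rfl F6
    have q344 : 0 < d3 (C 3) (C 4) B4 := by
      rw [hB4, d3_aff3, d3_self23]
      exact comboB ht4.1 rfl F5
    -- (0,1,3): d3 C1 C2 R3
    have g013 : 0 < d3 (C 1) (C 2) R3 := by
      rw [hR3, d3_aff3]
      exact comboA (le_of_lt hs1.1) hs1.2 g012 (le_of_lt q123)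
    -- d3 (C1) B2 B3 and related
    have w13 : 0 < d3 (C 1) B2 B3 := by
      rw [hB2, d3_aff2]
      exact comboA (le_of_lt ht2.1) ht2.2 q123 (le_of_lt q133)
    have w23 : 0 < d3 (C 2) B2 B3 := by
      rw [hB2, d3_aff2, d3_self12]
      exact comboB ht2.1 rfl q233
    have g023 : 0 < d3 (C 1) B2 R3 := by
      rw [hR3, d3_aff3, d3_self23]
      exact comboB hs1.1 rfl w13
    have g123 : 0 < d3 (C 2) B2 R3 := by
      rw [hR3, d3_aff3, d3_self23]
      exact comboB hs1.1 rfl w23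
    -- facts with B4
    have w14 : 0 < d3 (C 1) B2 B4 := by
      rw [hB2, d3_aff2]
      exact comboA (le_of_lt ht2.1) ht2.2 q124 (le_of_lt q134)
    have w24 : 0 < d3 (C 2) B2 B4 := by
      rw [hB2, d3_aff2, d3_self12]
      exact comboB ht2.1 rfl q234
    have v14 : 0 < d3 (C 1) B3 B4 := by
      rw [hB3, d3_aff2]
      exact comboA (le_of_lt ht3.1) ht3.2 q134 q144
    have v24 : 0 < d3 (C 2) B3 B4 := by
      rw [hB3, d3_aff2]
      exact comboA (le_of_lt ht3.1) ht3.2 q234 (le_of_lt q244)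
    have v34 : 0 < d3 (C 3) B3 B4 := by
      rw [hB3, d3_aff2, d3_self12]
      exact comboB ht3.1 rfl q344
    -- facts with Y = B3 + u (B4 - B3)
    have y12 : 0 < d3 (C 1) (C 2) Y := by
      rw [hY, d3_aff3]
      exact comboA (le_of_lt hu.1) hu.2 q123 (le_of_lt q124)
    have y1B2 : 0 < d3 (C 1) B2 Y := by
      rw [hY, d3_aff3]
      exact comboA (le_of_lt hu.1) hu.2 w13 (le_of_lt w14)
    have y2B2 : 0 < d3 (C 2) B2 Y := by
      rw [hY, d3_aff3]
      exact comboA (le_of_lt hu.1) hu.2 w23 (le_of_lt w24)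
    have y1B3 : 0 < d3 (C 1) B3 Y := by
      rw [hY, d3_aff3, d3_self23]
      exact comboB hu.1 rfl v14
    have y2B3 : 0 < d3 (C 2) B3 Y := by
      rw [hY, d3_aff3, d3_self23]
      exact comboB hu.1 rfl v24
    have vB2B3B4 : 0 < d3 B2 B3 B4 := by
      rw [hB2, d3_aff1]
      exact comboA (le_of_lt ht2.1) ht2.2 v24 (le_of_lt v34)
    have yB2B3 : 0 < d3 B2 B3 Y := by
      rw [hY, d3_aff3, d3_self23]
      exact comboB hu.1 rfl vB2B3B4
    -- facts with R4 = R3 + s2 (Y - R3)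
    have g014 : 0 < d3 (C 1) (C 2) R4 := by
      rw [hR4, d3_aff3]
      exact comboA (le_of_lt hs2.1) hs2.2 g013 (le_of_lt y12)
    have g024 : 0 < d3 (C 1) B2 R4 := by
      rw [hR4, d3_aff3]
      exact comboA (le_of_lt hs2.1) hs2.2 g023 (le_of_lt y1B2)
    have g124 : 0 < d3 (C 2) B2 R4 := by
      rw [hR4, d3_aff3]
      exact comboA (le_of_lt hs2.1) hs2.2 g123 (le_of_lt y2B2)
    have x1 : 0 < d3 (C 1) R3 Y := by
      rw [hR3, d3_aff2]
      exact comboA (le_of_lt hs1.1) hs1.2 y1B2 (le_of_lt y1B3)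
    have x2 : 0 < d3 (C 2) R3 Y := by
      rw [hR3, d3_aff2]
      exact comboA (le_of_lt hs1.1) hs1.2 y2B2 (le_of_lt y2B3)
    have x3 : 0 < d3 B2 R3 Y := by
      rw [hR3, d3_aff2, d3_self12]
      exact comboB hs1.1 rfl yB2B3
    have g034 : 0 < d3 (C 1) R3 R4 := by
      rw [hR4, d3_aff3, d3_self23]
      exact comboB hs2.1 rfl x1
    have g134 : 0 < d3 (C 2) R3 R4 := by
      rw [hR4, d3_aff3, d3_self23]
      exact comboB hs2.1 rfl x2
    have g234 : 0 < d3 B2 R3 R4 := by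
      rw [hR4, d3_aff3, d3_self23]
      exact comboB hs2.1 rfl x3
    have hA2 : a ≤ 2 := by omega
    have hB3' : b ≤ 3 := by omega
    interval_cases a <;> interval_cases b <;> interval_cases c <;>
      simp only [h0, h1, h2, h3, h4]
    exacts [g012, g013, g014, g023, g024, g034, g123, g124, g134, g234]

end Five

/-- **Every five consecutive vertices of a PLC pentagram spiral are the vertices of
a strictly convex pentagon.**  Let `S = (A,B)` be a seed of type `(n,k)` with
`(n,k) ≠ (4,1)` and let `p m = A_1(T_{n,k}^m(S))` be the inward spiral vertices.
Then for every `m`, the five consecutive points `p m, …, p (m+4)` are in strictly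
convex position in this cyclic order. -/
theorem five_consecutive_convex (n k : ℕ) (hn : 4 ≤ n) (hk1 : 1 ≤ k) (hkn : k ≤ n - 1)
    (hne : ¬(n = 4 ∧ k = 1)) (A B : ℕ → ℝ × ℝ) (hS : IsSeed n k A B) :
    ∀ m : ℕ,
      StrictlyConvexCCW (fun i : Fin 5 => ((seedMap n k)^[m + (i : ℕ)] (A, B)).1 1) := by
  intro m i j l hij hjl
  have hSm : IsSeed n k ((seedMap n k)^[m] (A, B)).1 ((seedMap n k)^[m] (A, B)).2 := by
    induction m with
    | zero => simpa using hS
    | succ m ih =>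
      rw [Function.iterate_succ_apply']
      exact seed_preserved' hn hk1 hkn _ ih
  have key := five_conv hn hk1 hkn hne _ hSm (i : ℕ) (j : ℕ) (l : ℕ) hij hjl
    (by omega : (l : ℕ) ≤ 4)
  show ccw _ _ _
  have e : ∀ (i : Fin 5), (seedMap n k)^[m + (i : ℕ)] (A, B)
      = (seedMap n k)^[(i : ℕ)] ((seedMap n k)^[m] (A, B)) := fun i => by
    rw [add_comm, Function.iterate_add_apply]
  simp only [e]
  exact key
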